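/- Let U, H be real Hilbert spaces, let S, S_σ : U → H be bounded linear operators, y_d ∈ H, α_l > 0. Let l̄ minimize j(l) = ½‖S l − y_d‖² + (α_l/2)‖l‖² over U and let l̄_σ minimize j_σ(l) = ½‖S_σ l − y_d‖² + (α_l/2)‖l‖² over U. Denote z̄ = S*(S l̄ − y_d) and z̄_{τh}(l̄) = S_σ*(S_σ l̄ − y_d). Then α_l ‖l̄ − l̄_σ‖² ≤ (z̄ − z̄_{τh}(l̄), l̄_σ − l̄), and consequently ‖l̄ − l̄_σ‖ ≤ (1/α_l)‖z̄ − z̄_{τh}(l̄)‖. -/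

import Mathlib

private lemma aux_coeff (c d : ℝ) (hd : 0 ≤ d) (h : ∀ t : ℝ, 0 ≤ c * t + d * t ^ 2) :
    c = 0 := by
  by_contra hc
  have hd1 : (0:ℝ) < 2 * (d + 1) := by linarith
  have ht := h (-c / (2 * (d + 1)))
  have hc2 : 0 < c ^ 2 := by positivity
  have hne : (2 * (d + 1) : ℝ) ≠ 0 := by positivity
  field_simp at ht
  nlinarith [ht, hc2, hd, hd1]

private lemma foc {U H : Type*}
    [NormedAddCommGroup U] [InnerProductSpace ℝ U] [CompleteSpace U]
    [NormedAddCommGroup H] [InnerProductSpace ℝ H] [CompleteSpace H]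
    (S : U →L[ℝ] H) (y_d : H) (αl : ℝ) (hαl : 0 < αl) (lbar : U)
    (hmin : ∀ l : U, (1 / 2) * ‖S lbar - y_d‖ ^ 2 + (αl / 2) * ‖lbar‖ ^ 2 ≤
      (1 / 2) * ‖S l - y_d‖ ^ 2 + (αl / 2) * ‖l‖ ^ 2) :
    (ContinuousLinearMap.adjoint S) (S lbar - y_d) + αl • lbar = 0 := by
  have key : ∀ v : U,
      (inner ℝ (S lbar - y_d) (S v) : ℝ) + αl * inner ℝ lbar v = 0 := by
    intro v
    apply aux_coeff _ ((1 / 2) * ‖S v‖ ^ 2 + (αl / 2) * ‖v‖ ^ 2)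
    · positivity
    · intro t
      have h := hmin (lbar + t • v)
      have e1 : S (lbar + t • v) - y_d = (S lbar - y_d) + t • (S v) := by
        simp [map_add, map_smul]; abel
      rw [e1] at h
      rw [norm_add_sq_real, norm_add_sq_real] at h
      rw [real_inner_smul_right, real_inner_smul_right, norm_smul, norm_smul] at h
      simp only [Real.norm_eq_abs, mul_pow, sq_abs] at h
      nlinarith [h]
  apply ext_inner_right ℝ
  intro v
  have := key v
  rw [inner_add_left, ContinuousLinearMap.adjoint_inner_left, real_inner_smul_left]
  simp [this]

theorem stmt_7 {U H : Type*}
    [NormedAddCommGroup U] [InnerProductSpace ℝ U] [CompleteSpace U]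
    [NormedAddCommGroup H] [InnerProductSpace ℝ H] [CompleteSpace H]
    (S Sσ : U →L[ℝ] H) (y_d : H) (αl : ℝ) (hαl : 0 < αl)
    (j jσ : U → ℝ)
    (hj : ∀ l, j l = (1 / 2) * ‖S l - y_d‖ ^ 2 + (αl / 2) * ‖l‖ ^ 2)
    (hjσ : ∀ l, jσ l = (1 / 2) * ‖Sσ l - y_d‖ ^ 2 + (αl / 2) * ‖l‖ ^ 2)
    (lbar lσ : U)
    (hmin : ∀ l : U, j lbar ≤ j l)
    (hminσ : ∀ l : U, jσ lσ ≤ jσ l)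
    (zbar zτh : U)
    (hzbar : zbar = (ContinuousLinearMap.adjoint S) (S lbar - y_d))
    (hzτh : zτh = (ContinuousLinearMap.adjoint Sσ) (Sσ lbar - y_d)) :
    αl * ‖lbar - lσ‖ ^ 2 ≤ (inner ℝ (zbar - zτh) (lσ - lbar) : ℝ) ∧
      ‖lbar - lσ‖ ≤ (1 / αl) * ‖zbar - zτh‖ := by
  have h1 : zbar + αl • lbar = 0 := by
    rw [hzbar]
    exact foc S y_d αl hαl lbar (fun l => by have := hmin l; rwa [hj, hj] at this)
  set zσ : U := (ContinuousLinearMap.adjoint Sσ) (Sσ lσ - y_d) with hzσ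
  have h2 : zσ + αl • lσ = 0 :=
    foc Sσ y_d αl hαl lσ (fun l => by have := hminσ l; rwa [hjσ, hjσ] at this)
  -- αl • (lbar - lσ) = zσ - zbar
  have h3 : αl • (lbar - lσ) = zσ - zbar := by
    have : αl • lbar = -zbar := by rw [eq_neg_iff_add_eq_zero, add_comm]; exact h1
    have h2' : αl • lσ = -zσ := by rw [eq_neg_iff_add_eq_zero, add_comm]; exact h2
    rw [smul_sub, this, h2']; abel
  have key1 : αl * ‖lbar - lσ‖ ^ 2 ≤ (inner ℝ (zbar - zτh) (lσ - lbar) : ℝ) := by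
    have e1 : αl * ‖lbar - lσ‖ ^ 2 = (inner ℝ (zbar - zσ) (lσ - lbar) : ℝ) := by
      rw [← real_inner_self_eq_norm_sq, ← real_inner_smul_left, h3]
      rw [show lbar - lσ = -(lσ - lbar) by abel, inner_neg_right,
        show zσ - zbar = -(zbar - zσ) by abel, inner_neg_left, neg_neg]
    have e2 : (inner ℝ (zτh - zσ) (lσ - lbar) : ℝ) = -‖Sσ (lσ - lbar)‖ ^ 2 := by
      have hz : zτh - zσ = (ContinuousLinearMap.adjoint Sσ) (Sσ (lbar - lσ)) := by
        rw [hzτh, hzσ, ← map_sub]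
        congr 1
        rw [map_sub]
        abel
      have hneg : Sσ (lbar - lσ) = -(Sσ (lσ - lbar)) := by
        rw [← map_neg]; congr 1; abel
      rw [hz, ContinuousLinearMap.adjoint_inner_left, hneg, inner_neg_left,
        real_inner_self_eq_norm_sq]
    have split : (inner ℝ (zbar - zτh) (lσ - lbar) : ℝ) =
        (inner ℝ (zbar - zσ) (lσ - lbar) : ℝ) - (inner ℝ (zτh - zσ) (lσ - lbar) : ℝ) := by
      rw [← inner_sub_left]; congr 1; abel
    rw [split, e2, e1]
    nlinarith [sq_nonneg ‖Sσ (lσ - lbar)‖]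
  refine ⟨key1, ?_⟩
  have cs : (inner ℝ (zbar - zτh) (lσ - lbar) : ℝ) ≤ ‖zbar - zτh‖ * ‖lbar - lσ‖ := by
    have := real_inner_le_norm (zbar - zτh) (lσ - lbar)
    rwa [norm_sub_rev lσ lbar] at this
  rcases eq_or_lt_of_le (norm_nonneg (lbar - lσ)) with h | h
  · rw [← h]; positivity
  · have h4 : αl * ‖lbar - lσ‖ ≤ ‖zbar - zτh‖ := by
      have h5 := key1.trans cs
      nlinarith [h5, h]
    rw [div_mul_eq_mul_div, le_div_iff₀ hαl]
    nlinarith [h4]
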